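/- Consider the map f(w) = (w + γAw)/‖w + γAw‖ on ℝⁿ \ {0}, where A is diagonalizable with positive eigenvalues and γ > 0. A unit vector w with Aw = λ_w w is a fixed point of f, and the Jacobian of f at such a fixed point equals (1/(1+γλ_w))·(I − wwᵀ)(γA + I); moreover, for any eigenvector v of A with eigenvalue λ_v and z = v − (wᵀv)w, this Jacobian maps z to ((1+γλ_v)/(1+γλ_w))·z. -/

import Mathlib

open Matrix

theorem vecMulVec_mulVec_eq' {n : ℕ} (u v x : Fin n → ℝ) :
    Matrix.vecMulVec u v *ᵥ x = (v ⬝ᵥ x) • u := by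
  ext i
  simp [Matrix.mulVec, Matrix.vecMulVec_apply, dotProduct, Finset.mul_sum, Finset.sum_mul,
    mul_assoc, mul_comm, mul_left_comm]

theorem stmt18 (n : ℕ) (A : Matrix (Fin n) (Fin n) ℝ) (γ : ℝ) (hγ : 0 < γ)
    (b : Module.Basis (Fin n) ℝ (Fin n → ℝ)) (μ : Fin n → ℝ)
    (heig : ∀ i, A.mulVec (b i) = μ i • b i) (hpos : ∀ i, 0 < μ i)
    (f : (Fin n → ℝ) → (Fin n → ℝ))
    (hf : f = fun u => (Real.sqrt ((u + γ • A.mulVec u) ⬝ᵥ (u + γ • A.mulVec u)))⁻¹ •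
      (u + γ • A.mulVec u))
    (w : Fin n → ℝ) (lw : ℝ) (hlw : 0 < lw)
    (hAw : A.mulVec w = lw • w) (hunit : w ⬝ᵥ w = 1)
    (J : Matrix (Fin n) (Fin n) ℝ)
    (hJ : J = (1 / (1 + γ * lw)) •
      (((1 : Matrix (Fin n) (Fin n) ℝ) - Matrix.vecMulVec w w) * (γ • A + 1))) :
    f w = w ∧
    HasFDerivAt f (LinearMap.toContinuousLinearMap (Matrix.toLin' J)) w ∧
    ∀ (vv : Fin n → ℝ) (lv : ℝ), A.mulVec vv = lv • vv →
      J.mulVec (vv - (w ⬝ᵥ vv) • w)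
        = ((1 + γ * lv) / (1 + γ * lw)) • (vv - (w ⬝ᵥ vv) • w) := by
  have hcpos : 0 < 1 + γ * lw := by positivity
  have hcne : (1 + γ * lw) ≠ 0 := ne_of_gt hcpos
  -- p := image of w under u ↦ u + γ A u
  have hp : w + γ • A.mulVec w = (1 + γ * lw) • w := by
    rw [hAw, smul_smul]
    ext i
    simp [mul_comm]
    ring
  -- universal formula for J *ᵥ x
  have hJv : ∀ x : Fin n → ℝ, J.mulVec x
      = (1 / (1 + γ * lw)) • ((x + γ • A.mulVec x) - (w ⬝ᵥ (x + γ • A.mulVec x)) • w) := by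
    intro x
    rw [hJ, smul_mulVec, ← mulVec_mulVec, add_mulVec, smul_mulVec, one_mulVec,
      sub_mulVec, one_mulVec, vecMulVec_mulVec_eq']
    rw [add_comm (γ • A *ᵥ x) x]
  -- dot product value at p
  have hpd : (w + γ • A.mulVec w) ⬝ᵥ (w + γ • A.mulVec w) = (1 + γ * lw) ^ 2 := by
    rw [hp, smul_dotProduct, dotProduct_smul, hunit, smul_eq_mul, smul_eq_mul]
    ring
  have hsq : Real.sqrt ((w + γ • A.mulVec w) ⬝ᵥ (w + γ • A.mulVec w)) = 1 + γ * lw := by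
    rw [hpd, Real.sqrt_sq hcpos.le]
  have hfw : f w = w := by
    rw [hf]
    simp only
    rw [hsq, hp, smul_smul, inv_mul_cancel₀ hcne, one_smul]
  refine ⟨hfw, ?_, ?_⟩
  · -- derivative
    classical
    set g : (Fin n → ℝ) →L[ℝ] (Fin n → ℝ) :=
      LinearMap.toContinuousLinearMap (Matrix.toLin' (γ • A + 1)) with hgdef
    have hg : ∀ u, g u = u + γ • A.mulVec u := by
      intro u
      simp only [hgdef, LinearMap.coe_toContinuousLinearMap', Matrix.toLin'_apply,
        add_mulVec, smul_mulVec, one_mulVec]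
      rw [add_comm]
    set p : Fin n → ℝ := g w with hpdef
    have hpw : p = (1 + γ * lw) • w := by rw [hpdef, hg, hp]
    have hppd : p ⬝ᵥ p = (1 + γ * lw) ^ 2 := by
      rw [hpw, smul_dotProduct, dotProduct_smul, hunit, smul_eq_mul, smul_eq_mul]
      ring
    have hppne : p ⬝ᵥ p ≠ 0 := by rw [hppd]; positivity
    have hsqp : Real.sqrt (p ⬝ᵥ p) = 1 + γ * lw := by rw [hppd, Real.sqrt_sq hcpos.le]
    set Dh : (Fin n → ℝ) →L[ℝ] ℝ :=
      ∑ i : Fin n, (p i • ContinuousLinearMap.proj i + p i • ContinuousLinearMap.proj i)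
      with hDh
    have hh : HasFDerivAt (fun x : Fin n → ℝ => x ⬝ᵥ x) Dh p := by
      have h1 : ∀ i ∈ Finset.univ, HasFDerivAt (fun x : Fin n → ℝ => x i * x i)
          ((p i • (ContinuousLinearMap.proj i : (Fin n → ℝ) →L[ℝ] ℝ)
            + p i • ContinuousLinearMap.proj i) : (Fin n → ℝ) →L[ℝ] ℝ) p := by
        intro i _
        have hpr : HasFDerivAt (fun x : Fin n → ℝ => x i)
            (ContinuousLinearMap.proj i : (Fin n → ℝ) →L[ℝ] ℝ) p :=
          (ContinuousLinearMap.proj i : (Fin n → ℝ) →L[ℝ] ℝ).hasFDerivAt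
        exact hpr.mul hpr
      have := HasFDerivAt.fun_sum h1
      simpa [dotProduct] using this
    have hsfd : HasFDerivAt (fun x : Fin n → ℝ => Real.sqrt (x ⬝ᵥ x))
        ((1 / (2 * Real.sqrt (p ⬝ᵥ p))) • Dh) p := hh.sqrt hppne
    have hsne : Real.sqrt (p ⬝ᵥ p) ≠ 0 := by rw [hsqp]; exact hcne
    have hinv : HasFDerivAt (fun x : Fin n → ℝ => (Real.sqrt (x ⬝ᵥ x))⁻¹)
        ((-(Real.sqrt (p ⬝ᵥ p) ^ 2)⁻¹) • ((1 / (2 * Real.sqrt (p ⬝ᵥ p))) • Dh)) p :=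
      (hasDerivAt_inv hsne).comp_hasFDerivAt p hsfd
    have hN : HasFDerivAt (fun x : Fin n → ℝ => (Real.sqrt (x ⬝ᵥ x))⁻¹ • x)
        ((Real.sqrt (p ⬝ᵥ p))⁻¹ • ContinuousLinearMap.id ℝ (Fin n → ℝ)
          + ((-(Real.sqrt (p ⬝ᵥ p) ^ 2)⁻¹) • ((1 / (2 * Real.sqrt (p ⬝ᵥ p))) • Dh)).smulRight p)
        p := hinv.smul (hasFDerivAt_id p)
    have hcomp := hN.comp w g.hasFDerivAt
    have hfeq : (fun x : Fin n → ℝ => (Real.sqrt (x ⬝ᵥ x))⁻¹ • x) ∘ g = f := by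
      funext u
      rw [hf]
      simp only [Function.comp_apply, hg u]
    have hDeq : (((Real.sqrt (p ⬝ᵥ p))⁻¹ • ContinuousLinearMap.id ℝ (Fin n → ℝ)
          + ((-(Real.sqrt (p ⬝ᵥ p) ^ 2)⁻¹) • ((1 / (2 * Real.sqrt (p ⬝ᵥ p))) • Dh)).smulRight
            p).comp g)
        = LinearMap.toContinuousLinearMap (Matrix.toLin' J) := by
      apply ContinuousLinearMap.ext
      intro v
      have hDhv : Dh (g v) = 2 * ((1 + γ * lw) * (w ⬝ᵥ g v)) := by
        rw [hDh]
        simp only [ContinuousLinearMap.sum_apply, ContinuousLinearMap.add_apply,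
          ContinuousLinearMap.smul_apply, ContinuousLinearMap.proj_apply, smul_eq_mul]
        rw [hpw]
        simp only [Pi.smul_apply, smul_eq_mul]
        rw [dotProduct, Finset.mul_sum, Finset.mul_sum]
        exact Finset.sum_congr rfl (fun i _ => by ring)
      simp only [ContinuousLinearMap.coe_comp', Function.comp_apply,
        ContinuousLinearMap.add_apply, ContinuousLinearMap.smul_apply,
        ContinuousLinearMap.coe_id', id_eq, ContinuousLinearMap.smulRight_apply,
        LinearMap.coe_toContinuousLinearMap', Matrix.toLin'_apply]
      rw [hDhv, hJv, hsqp, hpw, ← hg v]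
      match_scalars
      · field_simp
      · simp only [smul_eq_mul]
        field_simp
    rw [← hfeq, ← hDeq]
    exact hcomp
  · -- eigen computation
    intro vv lv hAv
    rw [hJv]
    have h1 : A.mulVec (vv - (w ⬝ᵥ vv) • w) = lv • vv - ((w ⬝ᵥ vv) * lw) • w := by
      rw [mulVec_sub, mulVec_smul, hAv, hAw, smul_smul]
    rw [h1]
    have h2 : w ⬝ᵥ ((vv - (w ⬝ᵥ vv) • w) + γ • (lv • vv - ((w ⬝ᵥ vv) * lw) • w))
        = (w ⬝ᵥ vv) * (γ * lv - γ * lw) := by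
      simp [dotProduct_add, dotProduct_sub, dotProduct_smul, hunit]
      ring
    rw [h2]
    match_scalars <;> field_simp <;> ring
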